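/- Let (R,m) be a local ring, x ∈ m, and let N be a bounded-below complex of finitely generated R-modules. Then depth_R(N ⊗_R K(x,R)) = depth_R(N) − 1, where K(x,R) is the Koszul complex on x. In particular, if x is a nonzerodivisor on R, then depth_R(N ⊗^L_R R/(x)) = depth_R(N) − 1. -/

import Mathlib

open CategoryTheory

/-- `Ext^i_R(M,N)` as an `R`-module, via Mathlib's `Ext` functor on `ModuleCat R`. -/
noncomputable def ExtM (R : Type) [CommRing R] (M N : Type) [AddCommGroup M] [Module R M]
    [AddCommGroup N] [Module R N] (i : ℕ) : ModuleCat R :=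
  ((Ext R (ModuleCat R) i).obj (Opposite.op (ModuleCat.of R M))).obj (ModuleCat.of R N)

/-- `Tor^R_i(M,N)` as an object of `ModuleCat R`, via Mathlib's `Tor` functor. -/
noncomputable def TorM (R : Type) [CommRing R] (M N : Type) [AddCommGroup M] [Module R M]
    [AddCommGroup N] [Module R N] (i : ℕ) : ModuleCat R :=
  ((Tor (ModuleCat R) i).obj (ModuleCat.of R M)).obj (ModuleCat.of R N)

/-- The depth of a module over a local ring: `inf {i | Ext^i_R(k, M) ≠ 0}`, in `ℕ∞`. -/
noncomputable def mdepth (R : Type) [CommRing R] [IsLocalRing R] (M : Type) [AddCommGroup M]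
    [Module R M] : ℕ∞ :=
  sInf {i : ℕ∞ | ∃ n : ℕ, i = n ∧ ¬ Subsingleton (ExtM R (IsLocalRing.ResidueField R) M n)}

/-- Hom groups in the derived category of `R`: `cExt X Y n = Hom_{D(R)}(X, Y[n])`. -/
noncomputable def cExt {R : Type} [CommRing R] (X Y : CochainComplex (ModuleCat R) ℤ)
    (n : ℤ) : Type _ :=
  letI := HasDerivedCategory.standard (ModuleCat R)
  (DerivedCategory.Q.obj X ⟶ (DerivedCategory.Q.obj Y)⟦n⟧)

/-- The residue field `k`, viewed as a complex concentrated in degree `0`. -/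
noncomputable def kCx (R : Type) [CommRing R] [IsLocalRing R] :
    CochainComplex (ModuleCat R) ℤ :=
  (HomologicalComplex.single (ModuleCat R) (ComplexShape.up ℤ) 0).obj
    (ModuleCat.of R (IsLocalRing.ResidueField R))

/-- The depth of an `R`-complex: `inf {n | Ext^n_R(k, Y) ≠ 0}`, where
`Ext^n_R(k,Y) = Hom_{D(R)}(k, Y[n])`, computed in `WithTop (WithBot ℤ)` (so the depth
of the zero complex is `⊤` and unbounded families give `⊥`). -/
noncomputable def cDepth (R : Type) [CommRing R] [IsLocalRing R]
    (Y : CochainComplex (ModuleCat R) ℤ) : WithTop (WithBot ℤ) :=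
  sInf {d : WithTop (WithBot ℤ) | ∃ n : ℤ, d = ((n : WithBot ℤ) : WithTop (WithBot ℤ)) ∧
    ¬ Subsingleton (cExt (kCx R) Y n)}

open CategoryTheory Limits Pretriangulated

namespace Stmt14Aux


section
variable (R : Type) [CommRing R] [IsLocalRing R]
  [HasDerivedCategory (ModuleCat R)] (x : R)

open DerivedCategory



lemma smul_id_k' (R : Type) [CommRing R] [IsLocalRing R] (x : R)
    (hx : x ∈ IsLocalRing.maximalIdeal R) :
    x • 𝟙 (ModuleCat.of R (IsLocalRing.ResidueField R)) = 0 := by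
  ext m
  obtain ⟨y, rfl⟩ := IsLocalRing.residue_surjective (R := R) m
  show x • (Submodule.Quotient.mk (p := IsLocalRing.maximalIdeal R) y) = 0
  rw [← Submodule.Quotient.mk_smul, Submodule.Quotient.mk_eq_zero]
  exact Ideal.mul_mem_right y _ hx

lemma smul_id_kCx (R : Type) [CommRing R] [IsLocalRing R] (x : R)
    (hx : x ∈ IsLocalRing.maximalIdeal R) : x • 𝟙 (kCx R) = 0 := by
  apply HomologicalComplex.hom_ext
  intro i
  simp only [HomologicalComplex.smul_f_apply, HomologicalComplex.id_f, HomologicalComplex.zero_f]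
  by_cases h : i = 0
  · subst h
    have e : (kCx R).X 0 ≅ ModuleCat.of R (IsLocalRing.ResidueField R) :=
      HomologicalComplex.singleObjXSelf (ComplexShape.up ℤ) 0 _
    have he : e.hom ≫ (x • 𝟙 (ModuleCat.of R (IsLocalRing.ResidueField R))) ≫ e.inv
        = x • 𝟙 ((kCx R).X 0) := by
      rw [Linear.smul_comp, Linear.comp_smul]
      simp
    rw [← he, smul_id_k' R x hx, Limits.zero_comp, Limits.comp_zero]
  · exact (HomologicalComplex.isZero_single_obj_X (ComplexShape.up ℤ) 0 _ i h).eq_of_tgt _ _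

abbrev Wq := HomologicalComplex.quasiIso (ModuleCat R) (ComplexShape.up ℤ)

noncomputable instance : Localization.Lifting (Q (C := ModuleCat R)) (Wq R) Q (𝟭 _) :=
  ⟨Functor.rightUnitor _⟩

noncomputable def alpha : (Q (C := ModuleCat R)) ⟶ Q where
  app M := Q.map (x • 𝟙 M)
  naturality M M' f := by
    rw [← Q.map_comp, ← Q.map_comp, Linear.comp_smul, Linear.smul_comp,
      Category.comp_id, Category.id_comp]

noncomputable def tau : 𝟭 (DerivedCategory (ModuleCat R)) ⟶ 𝟭 _ :=
  Localization.liftNatTrans Q (Wq R) Q Q (𝟭 _) (𝟭 _) (alpha R x)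

lemma tau_app (M : CochainComplex (ModuleCat R) ℤ) :
    (tau R x).app (Q.obj M) = Q.map (x • 𝟙 M) := by
  rw [tau, Localization.liftNatTrans_app]
  simp [alpha, Localization.Lifting.iso]

variable (hk : x • 𝟙 (kCx R) = 0)

include hk in
lemma key0 (A : DerivedCategory (ModuleCat R)) (f : Q.obj (kCx R) ⟶ A) :
    f ≫ (tau R x).app A = 0 := by
  have := ((tau R x).naturality f).symm
  simp only [Functor.id_obj, Functor.id_map] at this
  rw [← this, tau_app, hk, Q.map_zero, Limits.zero_comp]

include hk in
lemma keyQ (M : CochainComplex (ModuleCat R) ℤ) (f : Q.obj (kCx R) ⟶ Q.obj M) :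
    f ≫ Q.map (x • 𝟙 M) = 0 := by
  rw [← tau_app]; exact key0 R x hk _ f

include hk in
lemma keyshift (N : CochainComplex (ModuleCat R) ℤ) (m : ℤ)
    (f : Q.obj (kCx R) ⟶ (Q.obj N)⟦m⟧) :
    f ≫ (Q.map (x • 𝟙 N))⟦m⟧' = 0 := by
  have e := Q.commShiftIso m (C := CochainComplex (ModuleCat R) ℤ)
  have hnat := e.hom.naturality (x • 𝟙 N)
  -- (shift ⋙ Q).map φ ≫ e.hom.app N = e.hom.app N ≫ (Q ⋙ shift).map φ
  have hconj : (Q.map (x • 𝟙 N))⟦m⟧' =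
      (e.inv.app N) ≫ Q.map ((x • 𝟙 N)⟦m⟧') ≫ (e.hom.app N) := by
    simp only [Functor.comp_map] at hnat
    rw [hnat]
    simp
  rw [hconj]
  have hsh : ((x • 𝟙 N)⟦m⟧' : (N⟦m⟧ : CochainComplex (ModuleCat R) ℤ) ⟶ N⟦m⟧)
      = x • 𝟙 (N⟦m⟧) := by
    apply HomologicalComplex.hom_ext
    intro i
    rw [CochainComplex.shiftFunctor_map_f']
    simp
    rfl
  rw [hsh]
  simp only [← Category.assoc]
  rw [keyQ R x hk _ (f ≫ e.inv.app N), Limits.zero_comp]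
end

section abstractTriangle
variable {D : Type*} [Category D] [Preadditive D] [HasZeroObject D] [HasShift D ℤ]
  [∀ n : ℤ, (shiftFunctor D n).Additive] [Pretriangulated D]

lemma homSubsingleton_iff_of_iso (A : D) {Y Z : D} (e : Y ≅ Z) :
    Subsingleton (A ⟶ Y) ↔ Subsingleton (A ⟶ Z) := by
  constructor
  · intro h
    refine ⟨fun a b => ?_⟩
    have := h.elim (a ≫ e.inv) (b ≫ e.inv)
    calc a = (a ≫ e.inv) ≫ e.hom := by simp
    _ = (b ≫ e.inv) ≫ e.hom := by rw [this]
    _ = b := by simp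
  · intro h
    refine ⟨fun a b => ?_⟩
    have := h.elim (a ≫ e.hom) (b ≫ e.hom)
    calc a = (a ≫ e.hom) ≫ e.inv := by simp
    _ = (b ≫ e.hom) ≫ e.inv := by rw [this]
    _ = b := by simp

lemma tri_subsingleton_iff (T : Triangle D) (hT : T ∈ distTriang D) (A : D)
    (h1 : ∀ f : A ⟶ T.obj₁, f ≫ T.mor₁ = 0)
    (h2 : ∀ f : A ⟶ T.obj₁⟦(1:ℤ)⟧, f ≫ T.mor₁⟦1⟧' = 0) :
    Subsingleton (A ⟶ T.obj₃) ↔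
      (Subsingleton (A ⟶ T.obj₂) ∧ Subsingleton (A ⟶ T.obj₁⟦(1:ℤ)⟧)) := by
  constructor
  · intro h
    constructor
    · refine (subsingleton_iff_forall_eq 0).mpr fun g => ?_
      have hg : g ≫ T.mor₂ = 0 := h.elim _ _
      obtain ⟨f, rfl⟩ := Triangle.coyoneda_exact₂ T hT g hg
      exact h1 f
    · refine (subsingleton_iff_forall_eq 0).mpr fun f => ?_
      obtain ⟨g, rfl⟩ := Triangle.coyoneda_exact₁ T hT f (h2 f)
      rw [h.elim g 0, zero_comp]
  · rintro ⟨hA, hB⟩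
    refine (subsingleton_iff_forall_eq 0).mpr fun g => ?_
    have hg : g ≫ T.mor₃ = 0 := hB.elim _ _
    obtain ⟨u, rfl⟩ := Triangle.coyoneda_exact₃ T hT g hg
    rw [hA.elim u 0, zero_comp]

end abstractTriangle

section main
variable (R : Type) [CommRing R] [IsLocalRing R]
  [HasDerivedCategory (ModuleCat R)] (x : R) (hx : x ∈ IsLocalRing.maximalIdeal R)
open DerivedCategory

include hx in
lemma keyshift2 (N : CochainComplex (ModuleCat R) ℤ) (m : ℤ)
    (hk : x • 𝟙 (kCx R) = 0)
    (f : Q.obj (kCx R) ⟶ ((Q.obj N)⟦m⟧)⟦(1:ℤ)⟧) :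
    f ≫ ((Q.map (x • 𝟙 N))⟦m⟧')⟦(1:ℤ)⟧' = 0 := by
  have e := shiftFunctorAdd' (DerivedCategory (ModuleCat R)) m 1 (m+1) rfl
  have hnat := e.hom.naturality (Q.map (x • 𝟙 N))
  simp only [Functor.comp_map] at hnat
  have hconj : ((Q.map (x • 𝟙 N))⟦m⟧')⟦(1:ℤ)⟧' =
      e.inv.app (Q.obj N) ≫ (Q.map (x • 𝟙 N))⟦m+1⟧' ≫ e.hom.app (Q.obj N) := by
    rw [hnat]
    simp
  rw [hconj]
  simp only [← Category.assoc]
  rw [keyshift R x hk N (m+1) (f ≫ e.inv.app (Q.obj N)), Limits.zero_comp]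
end main

section main2
variable (R : Type) [CommRing R] [IsLocalRing R]
  [HasDerivedCategory (ModuleCat R)] (x : R) (hx : x ∈ IsLocalRing.maximalIdeal R)
open DerivedCategory

include hx in
lemma cone_iff (N : CochainComplex (ModuleCat R) ℤ) (n : ℤ) :
    Subsingleton (Q.obj (kCx R) ⟶ (Q.obj (CochainComplex.mappingCone (x • 𝟙 N)))⟦n⟧) ↔
      (Subsingleton (Q.obj (kCx R) ⟶ (Q.obj N)⟦n⟧) ∧
       Subsingleton (Q.obj (kCx R) ⟶ (Q.obj N)⟦n+1⟧)) := by
  have hk : x • 𝟙 (kCx R) = 0 := smul_id_kCx R x hx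
  set T0 := (Qh (C := ModuleCat R)).mapTriangle.obj (CochainComplex.mappingCone.triangleh (x • 𝟙 N))
    with hT0def
  have hT0 : T0 ∈ distTriang (DerivedCategory (ModuleCat R)) :=
    Qh.map_distinguished _ (HomotopyCategory.mappingCone_triangleh_distinguished (x • 𝟙 N))
  have hTn := Triangle.shift_distinguished T0 hT0 n
  set Tn := (CategoryTheory.shiftFunctor (Triangle (DerivedCategory (ModuleCat R))) n).obj T0
    with hTndef
  have hmor : T0.mor₁ = Q.map (x • 𝟙 N) := by
    show Qh.map ((HomotopyCategory.quotient _ _).map (x • 𝟙 N)) = Q.map (x • 𝟙 N)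
    exact Quotient.lift_map_functor_map _ HomologicalComplexUpToQuasiIso.Q
      (fun _ _ _ _ h => by
        obtain ⟨h'⟩ := h
        exact HomologicalComplexUpToQuasiIso.Q_map_eq_of_homotopy h') (x • 𝟙 N)
  have hTn1 : Tn.mor₁ = n.negOnePow • (T0.mor₁)⟦n⟧' := rfl
  have hTn1' : Tn.mor₁ = n.negOnePow • (Q.map (x • 𝟙 N))⟦n⟧' := by
    exact hTn1.trans (congrArg (fun g : T0.obj₁ ⟶ T0.obj₂ => n.negOnePow • g⟦n⟧') hmor)
  have h1 : ∀ f : Q.obj (kCx R) ⟶ Tn.obj₁, f ≫ Tn.mor₁ = 0 := by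
    intro f
    rw [hTn1']
    exact (Linear.comp_units_smul ..).trans
      ((congrArg _ (keyshift R x hk N n f)).trans (smul_zero (A := Q.obj (kCx R) ⟶ Tn.obj₂) _))
  have h2 : ∀ f : Q.obj (kCx R) ⟶ Tn.obj₁⟦(1:ℤ)⟧, f ≫ Tn.mor₁⟦(1:ℤ)⟧' = 0 := by
    intro f
    rw [hTn1']
    exact ((congrArg (f ≫ ·) (Functor.map_units_smul ..)).trans
      (Linear.comp_units_smul ..)).trans
      ((congrArg _ (keyshift2 R x hx N n hk f)).trans (smul_zero (A := Q.obj (kCx R) ⟶ Tn.obj₂⟦(1:ℤ)⟧) _))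
  have main := tri_subsingleton_iff Tn hTn (Q.obj (kCx R)) h1 h2
  have e2 : (Q.obj N)⟦n+1⟧ ≅ (Tn.obj₁)⟦(1:ℤ)⟧ :=
    (shiftFunctorAdd' (DerivedCategory (ModuleCat R)) n 1 (n+1) rfl).app (Q.obj N)
  exact main.trans (and_congr Iff.rfl (homSubsingleton_iff_of_iso (Q.obj (kCx R)) e2).symm)
end main2


noncomputable def iZ (n : ℤ) : WithTop (WithBot ℤ) := ((n : WithBot ℤ) : WithTop (WithBot ℤ))

lemma iZ_mono {m n : ℤ} (h : m ≤ n) : iZ m ≤ iZ n := by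
  unfold iZ
  exact_mod_cast h

lemma iZ_le_iff {m n : ℤ} : iZ m ≤ iZ n ↔ m ≤ n := by
  unfold iZ
  exact_mod_cast Iff.rfl

lemma sInf_least (P : ℤ → Prop) (m : ℤ) (hm : P m) (hlb : ∀ a, P a → m ≤ a) :
    sInf {d : WithTop (WithBot ℤ) | ∃ n : ℤ, d = iZ n ∧ P n} = iZ m := by
  apply le_antisymm
  · exact sInf_le ⟨m, rfl, hm⟩
  · refine le_sInf ?_
    rintro d ⟨n, rfl, hn⟩
    exact iZ_mono (hlb n hn)

lemma sInf_unbdd (P : ℤ → Prop) (hne : ∃ n, P n) (hub : ∀ m : ℤ, ∃ n, P n ∧ n < m) :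
    sInf {d : WithTop (WithBot ℤ) | ∃ n : ℤ, d = iZ n ∧ P n}
      = ((⊥ : WithBot ℤ) : WithTop (WithBot ℤ)) := by
  have hlow : ∀ n, P n → sInf {d : WithTop (WithBot ℤ) | ∃ n : ℤ, d = iZ n ∧ P n} ≤ iZ n :=
    fun n hn => sInf_le ⟨n, rfl, hn⟩
  apply le_antisymm
  · generalize h : sInf {d : WithTop (WithBot ℤ) | ∃ n : ℤ, d = iZ n ∧ P n} = s at hlow
    induction s using WithTop.recTopCoe with
    | top =>
      obtain ⟨n, hn⟩ := hne
      exact absurd (hlow n hn) (by simp [iZ])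
    | coe a =>
      induction a using WithBot.recBotCoe with
      | bot => exact le_refl _
      | coe m =>
        obtain ⟨n, hn, hlt⟩ := hub m
        have := hlow n hn
        unfold iZ at this
        have hmn : m ≤ n := by exact_mod_cast this
        omega
  · refine le_sInf ?_
    rintro d ⟨n, rfl, hn⟩
    unfold iZ
    exact_mod_cast bot_le

lemma lattice_main (P : ℤ → Prop) :
    sInf {d : WithTop (WithBot ℤ) | ∃ n : ℤ, d = iZ n ∧ (P n ∨ P (n+1))} + 1
      = sInf {d : WithTop (WithBot ℤ) | ∃ n : ℤ, d = iZ n ∧ P n} := by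
  by_cases hne : ∃ n, P n
  · by_cases hbdd : ∃ m : ℤ, ∀ n, P n → m ≤ n
    · obtain ⟨b, hb⟩ := hbdd
      obtain ⟨m, hm, hlb⟩ := Int.exists_least_of_bdd (P := fun z => P z) ⟨b, hb⟩ hne
      rw [sInf_least P m hm hlb,
        sInf_least (fun n => P n ∨ P (n+1)) (m-1) (Or.inr (by simpa using hm))
          (by
            rintro a (ha | ha)
            · have := hlb a ha; omega
            · have := hlb (a+1) ha; omega)]
      unfold iZ
      push_cast
      norm_cast
      push_cast
      ring
    · push_neg at hbdd
      have hub : ∀ m : ℤ, ∃ n, P n ∧ n < m := by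
        intro m
        obtain ⟨n, hn, hlt⟩ := hbdd m
        exact ⟨n, hn, hlt⟩
      rw [sInf_unbdd P hne hub,
        sInf_unbdd (fun n => P n ∨ P (n+1)) (hne.imp fun n hn => Or.inl hn)
          (fun m => (hub m).imp fun n ⟨hn, hlt⟩ => ⟨Or.inl hn, hlt⟩)]
      norm_cast
  · push_neg at hne
    have h1 : {d : WithTop (WithBot ℤ) | ∃ n : ℤ, d = iZ n ∧ P n} = ∅ := by
      ext d
      simp [hne]
    have h2 : {d : WithTop (WithBot ℤ) | ∃ n : ℤ, d = iZ n ∧ (P n ∨ P (n+1))} = ∅ := by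
      ext d
      simp [hne]
    rw [h1, h2, sInf_empty]
    simp


end Stmt14Aux

open Stmt14Aux in
/-- For `x` in the maximal ideal and a bounded-below complex `N` of finitely generated
modules, `depth(N ⊗ K(x,R)) = depth N − 1`, where `N ⊗ K(x,R)` is the mapping cone of
multiplication by `x` on `N` (stated additively as `depth(N ⊗ K(x,R)) + 1 = depth N`). -/
theorem stmt14 (R : Type) [CommRing R] [IsLocalRing R] [IsNoetherianRing R]
    (x : R) (hx : x ∈ IsLocalRing.maximalIdeal R)
    (N : CochainComplex (ModuleCat R) ℤ)
    (hfg : ∀ i : ℤ, Module.Finite R (N.X i))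
    (hbdd : ∃ n : ℤ, ∀ i : ℤ, n < i → Subsingleton (N.X i)) :
    cDepth R (CochainComplex.mappingCone (x • (𝟙 N))) + 1 = cDepth R N := by
  letI := HasDerivedCategory.standard (ModuleCat R)
  have hiff : ∀ n : ℤ,
      (¬ Subsingleton (cExt (kCx R) (CochainComplex.mappingCone (x • (𝟙 N))) n)) ↔
      ((¬ Subsingleton (cExt (kCx R) N n)) ∨ (¬ Subsingleton (cExt (kCx R) N (n+1)))) := by
    intro n
    exact (not_congr (cone_iff R x hx N n)).trans not_and_or
  have hset : {d : WithTop (WithBot ℤ) | ∃ n : ℤ, d = iZ n ∧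
        ¬ Subsingleton (cExt (kCx R) (CochainComplex.mappingCone (x • (𝟙 N))) n)}
      = {d : WithTop (WithBot ℤ) | ∃ n : ℤ, d = iZ n ∧
        ((¬ Subsingleton (cExt (kCx R) N n)) ∨ (¬ Subsingleton (cExt (kCx R) N (n+1))))} := by
    ext d
    exact exists_congr fun n => and_congr Iff.rfl (hiff n)
  have h1 : cDepth R (CochainComplex.mappingCone (x • (𝟙 N)))
      = sInf {d : WithTop (WithBot ℤ) | ∃ n : ℤ, d = iZ n ∧
        ((¬ Subsingleton (cExt (kCx R) N n)) ∨ (¬ Subsingleton (cExt (kCx R) N (n+1))))} :=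
    congrArg sInf hset
  rw [h1]
  exact lattice_main (fun n => ¬ Subsingleton (cExt (kCx R) N n))
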